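/- Let G be a connected finite simple graph on n vertices with adjacency matrix A and adjacency eigenvalues λ_1 ≥ λ_2 ≥ ... ≥ λ_n. Let t ≥ 1 be an integer and let p be a real polynomial of degree at most t, with W(p) = max_{u ∈ V(G)} (p(A))_{uu} and w(p) = min_{u ∈ V(G)} (p(A))_{uu}. Then eq_{t+1}(G) ≤ min{ |{i ∈ {1,...,n} : p(λ_i) ≥ w(p)}| , |{i ∈ {1,...,n} : p(λ_i) ≤ W(p)}| }, where eigenvalues are counted with multiplicity. -/

import Mathlib

open SimpleGraph

/-- `S` is a `t`-equidistant set of `G`: all distinct vertices of `S` are at distance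
exactly `t` in `G`. -/
def IsEquidistantSet {V : Type*} (G : SimpleGraph V) (t : ℕ) (S : Finset V) : Prop :=
  (S : Set V).Pairwise fun u v => G.dist u v = t

/-- The `t`-equidistant number of `G`: the maximum size of a `t`-equidistant set. -/
noncomputable def eqNum {V : Type*} [Fintype V] (G : SimpleGraph V) (t : ℕ) : ℕ :=
  sSup {n : ℕ | ∃ S : Finset V, IsEquidistantSet G t S ∧ S.card = n}

/-- `S` is a `t`-independent set of `G`: all distinct vertices of `S` are at pairwise
distance greater than `t` in `G`. -/
def IsTIndepSet {V : Type*} (G : SimpleGraph V) (t : ℕ) (S : Finset V) : Prop :=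
  (S : Set V).Pairwise fun u v => t < G.dist u v

/-- The `t`-independence number of `G`. -/
noncomputable def indepNumT {V : Type*} [Fintype V] (G : SimpleGraph V) (t : ℕ) : ℕ :=
  sSup {n : ℕ | ∃ S : Finset V, IsTIndepSet G t S ∧ S.card = n}

/-- The equidistant number of `G`: `max {eq_t(G) : 1 ≤ t ≤ diam G}`. -/
noncomputable def eqTotalNum {V : Type*} [Fintype V] (G : SimpleGraph V) : ℕ :=
  (Finset.Icc 1 G.diam).sup (eqNum G)

open Finset Matrix


lemma dot_sum' {ι V : Type*} [Fintype V] (s : Finset ι) (v : V → ℝ) (f : ι → V → ℝ) :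
    v ⬝ᵥ (∑ j ∈ s, f j) = ∑ j ∈ s, v ⬝ᵥ f j := by
  simp only [dotProduct, Finset.sum_apply, Finset.mul_sum]
  exact Finset.sum_comm

lemma sum_dot' {ι V : Type*} [Fintype V] (s : Finset ι) (v : V → ℝ) (f : ι → V → ℝ) :
    (∑ j ∈ s, f j) ⬝ᵥ v = ∑ j ∈ s, f j ⬝ᵥ v := by
  simp only [dotProduct, Finset.sum_apply, Finset.sum_mul]
  exact Finset.sum_comm

/-- Core interlacing-type bound. -/
lemma core_bound {V : Type*} [Fintype V] [DecidableEq V] (M : Matrix V V ℝ)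
    (v : V → V → ℝ) (μ : V → ℝ)
    (hortho : ∀ i j, v i ⬝ᵥ v j = if i = j then (1:ℝ) else 0)
    (heig : ∀ j, M *ᵥ v j = μ j • v j)
    (S : Finset V) (w : ℝ)
    (hdiag : ∀ u ∈ S, w ≤ M u u)
    (hoff : ∀ u ∈ S, ∀ x ∈ S, u ≠ x → M u x = 0) :
    S.card ≤ (Finset.univ.filter fun j => w ≤ μ j).card := by
  classical
  set T : Finset V := Finset.univ.filter (fun j => μ j < w) with hT
  set U : Submodule ℝ (V → ℝ) :=
    Submodule.span ℝ (Set.range fun u : S => Pi.single (u : V) (1:ℝ)) with hU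
  set E : Submodule ℝ (V → ℝ) := Submodule.span ℝ (Set.range fun j : T => v j) with hE
  -- key orthonormal computation
  have key : ∀ (c : T → ℝ) (i : T), v (i : V) ⬝ᵥ (∑ j : T, c j • v (j : V)) = c i := by
    intro c i
    rw [dot_sum']
    have : ∀ j : T, v (i : V) ⬝ᵥ (c j • v (j : V)) = c j * (if i = j then (1:ℝ) else 0) := by
      intro j
      rw [dotProduct_smul, hortho, smul_eq_mul]
      congr 1
      exact if_congr Subtype.ext_iff.symm rfl rfl
    simp_rw [this]
    simp
  have hUdim : Module.finrank ℝ U = S.card := by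
    have hli : LinearIndependent ℝ (fun u : S => (Pi.single (u : V) 1 : V → ℝ)) := by
      have h2 := (Pi.basisFun ℝ V).linearIndependent.comp
        (fun u : S => (u : V)) Subtype.val_injective
      simpa [Function.comp_def, Pi.basisFun_apply] using h2
    rw [hU, finrank_span_eq_card hli, Fintype.card_coe]
  have hvli : LinearIndependent ℝ (fun j : T => v (j : V)) := by
    rw [Fintype.linearIndependent_iff]
    intro g hg i
    have := key g i
    rw [hg] at this
    simpa using this.symm
  have hEdim : Module.finrank ℝ E = T.card := by
    rw [hE, finrank_span_eq_card hvli, Fintype.card_coe]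
  have hsupp : ∀ x ∈ U, ∀ u, u ∉ S → x u = 0 := by
    intro x hx
    refine Submodule.span_induction (p := fun x _ => ∀ u ∉ S, x u = 0) ?_ ?_ ?_ ?_ hx
    · rintro _ ⟨a, rfl⟩ u hu
      exact Pi.single_eq_of_ne (by rintro rfl; exact hu a.2) 1
    · intro u _; rfl
    · intro a b _ _ ha hb u hu
      simp [Pi.add_apply, ha u hu, hb u hu]
    · intro r a _ ha u hu
      simp [Pi.smul_apply, ha u hu]
  have hdisj : ∀ x, x ∈ U → x ∈ E → x = 0 := by
    intro x hxU hxE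
    by_contra hx
    rw [hE] at hxE
    obtain ⟨c, hc⟩ := (Submodule.mem_span_range_iff_exists_fun ℝ).mp hxE
    -- lower bound on quadratic form
    have hdot : x ⬝ᵥ (M *ᵥ x) = ∑ u, M u u * x u ^ 2 := by
      simp only [dotProduct, mulVec, dotProduct]
      refine Finset.sum_congr rfl fun u _ => ?_
      by_cases hu : u ∈ S
      · rw [Finset.mul_sum, Finset.sum_eq_single u]
        · ring
        · intro y _ hy
          by_cases hyS : y ∈ S
          · rw [hoff u hu y hyS (Ne.symm hy)]; ring
          · rw [hsupp x hxU y hyS]; ring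
        · simp
      · rw [hsupp x hxU u hu]; simp
    have hlow : w * (x ⬝ᵥ x) ≤ x ⬝ᵥ (M *ᵥ x) := by
      rw [hdot]
      have : x ⬝ᵥ x = ∑ u, x u ^ 2 := by
        simp [dotProduct, sq]
      rw [this, Finset.mul_sum]
      refine Finset.sum_le_sum fun u _ => ?_
      by_cases hu : u ∈ S
      · exact mul_le_mul_of_nonneg_right (hdiag u hu) (sq_nonneg _)
      · rw [hsupp x hxU u hu]; simp
    -- upper bound via eigen-decomposition
    have hMx : M *ᵥ x = ∑ j : T, (c j * μ (j : V)) • v (j : V) := by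
      rw [← hc]
      rw [show M *ᵥ (∑ j : T, c j • v (j:V)) = ∑ j : T, M *ᵥ (c j • v (j:V)) from
        map_sum M.mulVecLin _ _]
      refine Finset.sum_congr rfl fun j _ => ?_
      rw [show M *ᵥ (c j • v (j:V)) = c j • (M *ᵥ v (j:V)) from M.mulVecLin.map_smul _ _,
        heig, smul_smul]
    have hq2 : x ⬝ᵥ (M *ᵥ x) = ∑ j : T, μ (j : V) * c j ^ 2 := by
      rw [hMx, ← hc, sum_dot']
      refine Finset.sum_congr rfl fun i _ => ?_
      rw [smul_dotProduct, key (fun j => c j * μ (j : V)) i, smul_eq_mul]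
      ring
    have hnorm : x ⬝ᵥ x = ∑ j : T, c j ^ 2 := by
      nth_rewrite 2 [← hc]
      rw [← hc, sum_dot']
      refine Finset.sum_congr rfl fun i _ => ?_
      rw [smul_dotProduct, key c i, smul_eq_mul, sq]
    have hex : ∃ i : T, c i ≠ 0 := by
      by_contra h
      push_neg at h
      apply hx
      rw [← hc]
      simp [h]
    obtain ⟨i₀, hi₀⟩ := hex
    have hlt : ∑ j : T, μ (j : V) * c j ^ 2 < ∑ j : T, w * c j ^ 2 := by
      refine Finset.sum_lt_sum (fun j _ => ?_) ⟨i₀, Finset.mem_univ _, ?_⟩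
      · have hj : μ (j : V) < w := (Finset.mem_filter.mp j.2).2
        nlinarith [sq_nonneg (c j)]
      · have hj : μ (i₀ : V) < w := (Finset.mem_filter.mp i₀.2).2
        have : (0:ℝ) < c i₀ ^ 2 := by positivity
        nlinarith
    rw [hq2] at hlow
    rw [hnorm, Finset.mul_sum] at hlow
    linarith
  have hbot : U ⊓ E = ⊥ := by
    rw [eq_bot_iff]
    rintro x ⟨hxU, hxE⟩
    exact hdisj x hxU hxE
  have hsum := Submodule.finrank_sup_add_finrank_inf_eq U E
  rw [hbot, finrank_bot, add_zero] at hsum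
  have hle : Module.finrank ℝ (U ⊔ E : Submodule ℝ (V → ℝ)) ≤ Fintype.card V := by
    have := Submodule.finrank_le (U ⊔ E : Submodule ℝ (V → ℝ))
    simpa [Module.finrank_pi] using this
  have hcards : S.card + T.card ≤ Fintype.card V := by
    rw [← hUdim, ← hEdim, ← hsum]; exact hle
  have hcompl : T.card + (Finset.univ.filter fun j => w ≤ μ j).card = Fintype.card V := by
    have := Finset.card_filter_add_card_filter_not (s := Finset.univ)
      (p := fun j => μ j < w)
    simp only [not_lt] at this
    simpa [hT, Finset.card_univ] using this
  omega

lemma aeval_mulVec_eig {V : Type*} [Fintype V] [DecidableEq V] (A : Matrix V V ℝ)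
    (x : V → ℝ) (μ : ℝ) (hx : A *ᵥ x = μ • x) (p : Polynomial ℝ) :
    (Polynomial.aeval A p) *ᵥ x = p.eval μ • x := by
  have hpow : ∀ k : ℕ, (A ^ k) *ᵥ x = μ ^ k • x := by
    intro k; induction k with
    | zero => simp
    | succ k ih =>
      rw [pow_succ, ← Matrix.mulVec_mulVec, hx, Matrix.mulVec_smul, ih, smul_smul, pow_succ]
      ring_nf
  induction p using Polynomial.induction_on' with
  | add f g hf hg => rw [map_add, Matrix.add_mulVec, hf, hg, Polynomial.eval_add, add_smul]
  | monomial k a =>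
    rw [Polynomial.aeval_monomial, Polynomial.eval_monomial,
      Algebra.algebraMap_eq_smul_one, smul_mul_assoc, one_mul,
      Matrix.smul_mulVec, hpow, smul_smul]


open SimpleGraph in
lemma aeval_offdiag {V : Type*} [Fintype V] [DecidableEq V] (G : SimpleGraph V)
    [DecidableRel G.Adj] (p : Polynomial ℝ) (u v : V) (h : p.natDegree < G.dist u v) :
    (Polynomial.aeval (G.adjMatrix ℝ) p) u v = 0 := by
  rw [Polynomial.aeval_eq_sum_range]
  rw [Matrix.sum_apply]
  refine Finset.sum_eq_zero fun i hi => ?_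
  have hi' : i < G.dist u v := by
    have := Finset.mem_range.mp hi
    omega
  have hzero : (G.adjMatrix ℝ ^ i) u v = 0 := by
    rw [SimpleGraph.adjMatrix_pow_apply_eq_card_walk]
    haveI : IsEmpty { q : G.Walk u v | q.length = i } := by
      constructor
      rintro ⟨q, hq⟩
      have := SimpleGraph.dist_le q
      simp only [Set.mem_setOf_eq] at hq
      omega
    norm_cast
    exact Fintype.card_eq_zero
  simp [Matrix.smul_apply, hzero]

lemma ncard_comp_equiv {n : ℕ} {V : Type*} [Fintype V] [DecidableEq V] (e : Fin n ≃ V)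
    (P : V → Prop) [DecidablePred P] :
    {i : Fin n | P (e i)}.ncard = (Finset.univ.filter P).card := by
  have h1 : e '' {i : Fin n | P (e i)} = {j | P j} := by
    ext j
    constructor
    · rintro ⟨i, hi, rfl⟩; exact hi
    · intro hj; exact ⟨e.symm j, by simpa using hj, by simp⟩
  calc {i : Fin n | P (e i)}.ncard
      = (e '' {i : Fin n | P (e i)}).ncard := (Set.ncard_image_of_injective _ e.injective).symm
    _ = {j | P j}.ncard := by rw [h1]
    _ = (Finset.univ.filter P).card := by
        rw [Set.ncard_eq_toFinset_card', Set.toFinset_setOf]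


/-- Inertial-type bound. Let `G` be connected on `n` vertices with adjacency
matrix `A` and eigenvalues `λ_1 ≥ ⋯ ≥ λ_n` (with multiplicity). For a real polynomial `p` of
degree at most `t`, with `W(p)` and `w(p)` the largest and smallest diagonal entries of `p(A)`:
`eq_{t+1}(G) ≤ min{#{i : p(λ_i) ≥ w(p)}, #{i : p(λ_i) ≤ W(p)}}`. -/

theorem eqNum_succ_le_inertial_bound {V : Type*} [Fintype V] [DecidableEq V]
    (G : SimpleGraph V) [DecidableRel G.Adj] (hG : G.Connected)
    (n : ℕ) (hn : Fintype.card V = n)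
    (hA : (G.adjMatrix ℝ).IsHermitian)
    (lam : Fin n → ℝ) (hanti : Antitone lam)
    (hlist : ∃ e : Fin n ≃ V, ∀ i, lam i = hA.eigenvalues (e i))
    (t : ℕ) (ht : 1 ≤ t) (p : Polynomial ℝ) (hp : p.natDegree ≤ t)
    (W w : ℝ)
    (hW : IsGreatest (Set.range fun u : V => (Polynomial.aeval (G.adjMatrix ℝ) p) u u) W)
    (hw : IsLeast (Set.range fun u : V => (Polynomial.aeval (G.adjMatrix ℝ) p) u u) w) :
    eqNum G (t + 1) ≤
      min {i : Fin n | w ≤ p.eval (lam i)}.ncard {i : Fin n | p.eval (lam i) ≤ W}.ncard := by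
  classical
  obtain ⟨e, he⟩ := hlist
  set M : Matrix V V ℝ := Polynomial.aeval (G.adjMatrix ℝ) p with hM
  set v : V → V → ℝ := fun j => ⇑(hA.eigenvectorBasis j) with hv
  set μ : V → ℝ := fun j => p.eval (hA.eigenvalues j) with hμ
  have hortho : ∀ i j, v i ⬝ᵥ v j = if i = j then (1:ℝ) else 0 := by
    intro i j
    have h1 := orthonormal_iff_ite.mp hA.eigenvectorBasis.orthonormal i j
    simpa [PiLp.inner_apply, dotProduct, RCLike.inner_apply, mul_comm] using h1
  have heig : ∀ j, M *ᵥ v j = μ j • v j := fun j =>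
    aeval_mulVec_eig _ _ _ (hA.mulVec_eigenvectorBasis j) p
  have key : ∀ S : Finset V, IsEquidistantSet G (t+1) S →
      S.card ≤ (Finset.univ.filter fun j => w ≤ μ j).card ∧
      S.card ≤ (Finset.univ.filter fun j => μ j ≤ W).card := by
    intro S hS
    have hoff : ∀ u ∈ S, ∀ x ∈ S, u ≠ x → M u x = 0 := by
      intro u hu x hx hux
      apply aeval_offdiag
      rw [hS hu hx hux]
      omega
    have hdiag1 : ∀ u ∈ S, w ≤ M u u := fun u _ => hw.2 ⟨u, rfl⟩
    have hdiag2 : ∀ u ∈ S, M u u ≤ W := fun u _ => hW.2 ⟨u, rfl⟩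
    refine ⟨core_bound M v μ hortho heig S w hdiag1 hoff, ?_⟩
    have h2 := core_bound (-M) v (fun j => -μ j)
      hortho
      (fun j => by rw [Matrix.neg_mulVec, heig, neg_smul])
      S (-W)
      (fun u hu => by simpa using neg_le_neg (hdiag2 u hu))
      (fun u hu x hx hux => by simp [hoff u hu x hx hux])
    have heq : (Finset.univ.filter fun j => -W ≤ -μ j)
        = (Finset.univ.filter fun j => μ j ≤ W) := by
      apply Finset.filter_congr
      intro j _
      simp [neg_le_neg_iff]
    rwa [heq] at h2
  have hcard1 : {i : Fin n | w ≤ p.eval (lam i)}.ncard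
      = (Finset.univ.filter fun j => w ≤ μ j).card := by
    have h1 : {i : Fin n | w ≤ p.eval (lam i)} = {i : Fin n | w ≤ μ (e i)} := by
      ext i; simp [he i, hμ]
    rw [h1]
    exact ncard_comp_equiv e (fun j => w ≤ μ j)
  have hcard2 : {i : Fin n | p.eval (lam i) ≤ W}.ncard
      = (Finset.univ.filter fun j => μ j ≤ W).card := by
    have h1 : {i : Fin n | p.eval (lam i) ≤ W} = {i : Fin n | μ (e i) ≤ W} := by
      ext i; simp [he i, hμ]
    rw [h1]
    exact ncard_comp_equiv e (fun j => μ j ≤ W)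
  apply csSup_le
  · exact ⟨0, ∅, by simp [IsEquidistantSet], rfl⟩
  rintro m ⟨S, hS, rfl⟩
  obtain ⟨h1, h2⟩ := key S hS
  rw [le_min_iff, hcard1, hcard2]
  exact ⟨h1, h2⟩
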